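/- arXiv:1508.05079 — 9 statements merged into one kernel-verified Lean document; each statement's English description precedes it below -/
import Mathlib

section
/- Let ε ∈ {1, −1}, let ν, β be nonnegative integers, let α be a positive integer, and let x ∈ ℤ. For m ∈ ℕ and N ∈ ℕ define the partial sum S_m(N) = ∑_{n=0}^{N−1} ε^n (n+ν)! (n+ν)^m x^{αn+β} (an integer). Then for every k ∈ ℕ and every N ∈ ℕ the identity S_k(N) = ν!·ν^k·x^β + ε·x^α·S_0(N) + ε·x^α·∑_{ℓ=1}^{k+1} binom(k+1, ℓ)·S_ℓ(N) − ε^N·(N+ν)!·(N+ν)^k·x^{αN+β} holds in ℤ. -/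
theorem stmt_4 (ε : ℤ) (hε : ε = 1 ∨ ε = -1) (ν β : ℕ) (α : ℕ) (hα : 0 < α)
    (x : ℤ) (S : ℕ → ℕ → ℤ)
    (hS : ∀ m N : ℕ, S m N =
      ∑ n ∈ Finset.range N,
        ε ^ n * ((n + ν).factorial : ℤ) * ((n : ℤ) + ν) ^ m * x ^ (α * n + β))
    (k N : ℕ) :
    S k N =
      (ν.factorial : ℤ) * (ν : ℤ) ^ k * x ^ β + ε * x ^ α * S 0 N +
        ε * x ^ α * ∑ ℓ ∈ Finset.Icc 1 (k + 1), ((k + 1).choose ℓ : ℤ) * S ℓ N -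
        ε ^ N * ((N + ν).factorial : ℤ) * ((N : ℤ) + ν) ^ k * x ^ (α * N + β) := by
  set f : ℕ → ℤ := fun n =>
    ε ^ n * ((n + ν).factorial : ℤ) * ((n : ℤ) + ν) ^ k * x ^ (α * n + β) with hf
  have key : ∀ n : ℕ,
      ε * x ^ α * (ε ^ n * ((n + ν).factorial : ℤ) * ((n : ℤ) + ν) ^ 0 * x ^ (α * n + β)
        + ∑ ℓ ∈ Finset.Icc 1 (k + 1), ((k + 1).choose ℓ : ℤ) *
            (ε ^ n * ((n + ν).factorial : ℤ) * ((n : ℤ) + ν) ^ ℓ * x ^ (α * n + β)))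
      = f (n + 1) := by
    intro n
    have hbin : ((n : ℤ) + ν + 1) ^ (k + 1)
        = ∑ ℓ ∈ Finset.range (k + 2), ((n : ℤ) + ν) ^ ℓ * ((k + 1).choose ℓ : ℤ) := by
      simpa using add_pow ((n : ℤ) + ν) 1 (k + 1)
    have hset : Finset.range (k + 2) = insert 0 (Finset.Icc 1 (k + 1)) := by
      ext m; simp [Finset.mem_range, Finset.mem_Icc]; omega
    have hfac : (((n + 1) + ν).factorial : ℤ)
        = ((n : ℤ) + ν + 1) * ((n + ν).factorial : ℤ) := by
      have : (n + 1) + ν = (n + ν) + 1 := by ring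
      rw [this, Nat.factorial_succ]; push_cast; ring
    have hx : x ^ (α * (n + 1) + β) = x ^ (α * n + β) * x ^ α := by
      rw [← pow_add]; ring_nf
    have hε1 : ε ^ (n + 1) = ε * ε ^ n := by ring
    simp only [hf, hfac, hx, hε1]
    have : (((n + 1 : ℕ) : ℤ) + ν) = (n : ℤ) + ν + 1 := by push_cast; ring
    rw [this]
    have expand : ((n : ℤ) + ν + 1) ^ (k + 1)
        = ((n : ℤ) + ν) ^ 0 + ∑ ℓ ∈ Finset.Icc 1 (k + 1),
            ((k + 1).choose ℓ : ℤ) * ((n : ℤ) + ν) ^ ℓ := by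
      rw [hbin, hset, Finset.sum_insert (by simp)]
      simp [mul_comm]
    have step : ε * ε ^ n * (((n : ℤ) + ν + 1) * ((n + ν).factorial : ℤ)) *
          ((n : ℤ) + ν + 1) ^ k * (x ^ (α * n + β) * x ^ α)
        = ε * x ^ α * (ε ^ n * ((n + ν).factorial : ℤ) * x ^ (α * n + β)) *
            ((n : ℤ) + ν + 1) ^ (k + 1) := by ring
    rw [step, expand, mul_add, Finset.mul_sum]
    rw [mul_add, Finset.mul_sum]
    congr 1
    · ring
    · exact Finset.sum_congr rfl fun ℓ _ => by ring
  simp only [hS]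
  have hswap : ∑ ℓ ∈ Finset.Icc 1 (k + 1), ((k + 1).choose ℓ : ℤ) *
      ∑ n ∈ Finset.range N,
        ε ^ n * ((n + ν).factorial : ℤ) * ((n : ℤ) + ν) ^ ℓ * x ^ (α * n + β)
      = ∑ n ∈ Finset.range N, ∑ ℓ ∈ Finset.Icc 1 (k + 1), ((k + 1).choose ℓ : ℤ) *
          (ε ^ n * ((n + ν).factorial : ℤ) * ((n : ℤ) + ν) ^ ℓ * x ^ (α * n + β)) := by
    rw [Finset.sum_comm]
    apply Finset.sum_congr rfl; intro ℓ _; rw [Finset.mul_sum]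
  rw [hswap]
  have hcomb : ε * x ^ α * ∑ n ∈ Finset.range N,
        ε ^ n * ((n + ν).factorial : ℤ) * ((n : ℤ) + ν) ^ 0 * x ^ (α * n + β)
      + ε * x ^ α * ∑ n ∈ Finset.range N, ∑ ℓ ∈ Finset.Icc 1 (k + 1),
          ((k + 1).choose ℓ : ℤ) *
          (ε ^ n * ((n + ν).factorial : ℤ) * ((n : ℤ) + ν) ^ ℓ * x ^ (α * n + β))
      = ∑ n ∈ Finset.range N, f (n + 1) := by
    rw [Finset.mul_sum, Finset.mul_sum, ← Finset.sum_add_distrib]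
    apply Finset.sum_congr rfl
    intro n _
    rw [← key n, mul_add]
  have hf0 : (ν.factorial : ℤ) * (ν : ℤ) ^ k * x ^ β = f 0 := by
    simp [hf]
  have hfN : ε ^ N * ((N + ν).factorial : ℤ) * ((N : ℤ) + ν) ^ k * x ^ (α * N + β) = f N := by
    simp [hf]
  have h1 : ∑ n ∈ Finset.range (N + 1), f n = ∑ n ∈ Finset.range N, f (n + 1) + f 0 :=
    Finset.sum_range_succ' f N
  have h2 : ∑ n ∈ Finset.range (N + 1), f n = ∑ n ∈ Finset.range N, f n + f N :=
    Finset.sum_range_succ f N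
  rw [hf0, hfN]
  have := hcomb
  linarith [h1, h2, hcomb]
end

section
/- Let ε ∈ {1, −1}, let ν, β be nonnegative integers, let α be a positive integer, and let x ∈ ℤ. Then for every N ≥ 1 the identity ∑_{n=0}^{N−1} ε^n (n+ν)! [x^{2α}(n+ν)^2 − (x^{2α} − 3εx^α + 1)] x^{αn+β} = ε·ν!·[(2−ν)x^α − ε]·x^β + [(N+ν−2)x^α + ε]·ε^{N−1}·(N+ν)!·x^{αN+β} holds in ℤ. -/
theorem stmt_6 (ε : ℤ) (hε : ε = 1 ∨ ε = -1) (ν β : ℕ) (α : ℕ) (hα : 0 < α)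
    (x : ℤ) (N : ℕ) (hN : 1 ≤ N) :
    (∑ n ∈ Finset.range N,
        ε ^ n * ((n + ν).factorial : ℤ) *
          (x ^ (2 * α) * ((n : ℤ) + ν) ^ 2 - (x ^ (2 * α) - 3 * ε * x ^ α + 1)) *
          x ^ (α * n + β)) =
      ε * (ν.factorial : ℤ) * ((2 - (ν : ℤ)) * x ^ α - ε) * x ^ β +
        (((N : ℤ) + ν - 2) * x ^ α + ε) * ε ^ (N - 1) *
          ((N + ν).factorial : ℤ) * x ^ (α * N + β) := by
  have hε2 : ε ^ 2 = 1 := by rcases hε with h | h <;> simp [h]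
  induction N with
  | zero => omega
  | succ N ih =>
    have hfac : (((N + 1) + ν).factorial : ℤ) = ((N : ℤ) + 1 + ν) * ((N + ν).factorial : ℤ) := by
      have : (N + 1) + ν = (N + ν) + 1 := by ring
      rw [this, Nat.factorial_succ]
      push_cast; ring
    have hx : x ^ (α * (N + 1) + β) = x ^ α * x ^ (α * N + β) := by
      rw [← pow_add]; ring_nf
    have hx2 : x ^ (2 * α) = x ^ α * x ^ α := by rw [← pow_add]; ring_nf
    rcases Nat.eq_zero_or_pos N with hN0 | hN1
    · subst hN0
      rw [Finset.sum_range_one, hfac, hx, hx2]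
      simp only [Nat.zero_add, Nat.mul_zero]
      push_cast
      linear_combination ((ν.factorial : ℤ) * x ^ β) * hε2
    · rw [Finset.sum_range_succ, ih hN1]
      have hεN : ε ^ N = ε * ε ^ (N - 1) := by
        conv_lhs => rw [show N = 1 + (N - 1) by omega]
        rw [pow_add, pow_one]
      have hεN' : ε ^ ((N + 1) - 1) = ε * ε ^ (N - 1) := by
        rw [Nat.add_sub_cancel, hεN]
      rw [hfac, hεN', hεN, hx, hx2]
      push_cast
      linear_combination ((2 - (N : ℤ) - ν) * x ^ α * ε ^ (N - 1) *
        ((N + ν).factorial : ℤ) * x ^ (α * N + β)) * hε2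
end

section
/- Let ε ∈ {1, −1}, let ν, β be nonnegative integers, let α be a positive integer, and let x ∈ ℤ. Suppose U : ℕ → ℤ satisfies the U-recurrence, V : ℕ → ℤ satisfies the V-recurrence, and A : ℕ × ℕ → ℤ satisfies the A-recurrence. Then for every k ≥ 1 and every N ≥ 1 the identity ∑_{n=0}^{N−1} ε^n (n+ν)! [(n+ν)^k x^{kα} + U(k)] x^{αn+β} = V(k−1) + A(k−1, N)·ε^{N−1}·(N+ν)!·x^{αN+β} holds in ℤ. -/
open Finset

private lemma binom_aux' (m : ℕ) (y : ℤ) :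
    ∑ ℓ ∈ Finset.Icc 1 m, (m.choose ℓ : ℤ) * y ^ ℓ = (y + 1) ^ m - 1 := by
  have hins : Finset.range (m + 1) = insert 0 (Finset.Icc 1 m) := by
    ext a
    simp only [Finset.mem_range, Finset.mem_insert, Finset.mem_Icc]
    omega
  have h := add_pow y 1 m
  rw [hins, Finset.sum_insert (by simp)] at h
  simp only [one_pow, mul_one, pow_zero, Nat.choose_zero_right, Nat.cast_one, one_mul] at h
  rw [h]
  rw [Finset.sum_congr rfl (fun ℓ _ => mul_comm ((m.choose ℓ : ℤ)) (y ^ ℓ))]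
  ring

private lemma Lcombo' (ε : ℤ) (hε2 : ε * ε = 1) (ν β α : ℕ) (x : ℤ) (U : ℕ → ℤ)
    (hU : ∀ k : ℕ, 1 ≤ k →
      (∑ ℓ ∈ Finset.Icc 1 (k + 1),
          ((k + 1).choose ℓ : ℤ) * x ^ ((k + 1 - ℓ) * α) * U ℓ) -
        ε * U k - x ^ ((k + 1) * α) = 0)
    (k : ℕ) (hk : 1 ≤ k) (N : ℕ) :
    (∑ ℓ ∈ Finset.Icc 1 (k + 1), ((k + 1).choose ℓ : ℤ) * x ^ ((k + 1 - ℓ) * α) *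
        (∑ n ∈ Finset.range N, ε ^ n * ((n + ν).factorial : ℤ) *
          (((n : ℤ) + ν) ^ ℓ * x ^ (ℓ * α) + U ℓ) * x ^ (α * n + β)))
    = ε * (∑ n ∈ Finset.range N, ε ^ n * ((n + ν).factorial : ℤ) *
          (((n : ℤ) + ν) ^ k * x ^ (k * α) + U k) * x ^ (α * n + β))
      + (ε ^ (N + 1) * ((N + ν).factorial : ℤ) * ((N : ℤ) + ν) ^ k * x ^ (k * α + α * N + β)
         - ε * (ν.factorial : ℤ) * (ν : ℤ) ^ k * x ^ (k * α + β)) := by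
  have hUk : (∑ ℓ ∈ Finset.Icc 1 (k + 1),
      ((k + 1).choose ℓ : ℤ) * x ^ ((k + 1 - ℓ) * α) * U ℓ)
      = ε * U k + x ^ ((k + 1) * α) := by linarith [hU k hk]
  rw [Finset.sum_congr rfl (fun ℓ _ => Finset.mul_sum _ _ _), Finset.sum_comm]
  have inner : ∀ n : ℕ, (∑ ℓ ∈ Finset.Icc 1 (k + 1),
      ((k + 1).choose ℓ : ℤ) * x ^ ((k + 1 - ℓ) * α) *
        (ε ^ n * ((n + ν).factorial : ℤ) *
          (((n : ℤ) + ν) ^ ℓ * x ^ (ℓ * α) + U ℓ) * x ^ (α * n + β)))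
      = ε ^ n * ((n + ν).factorial : ℤ) * x ^ (α * n + β) *
          (x ^ ((k + 1) * α) * ((((n : ℤ) + ν) + 1) ^ (k + 1) - 1)
           + (ε * U k + x ^ ((k + 1) * α))) := by
    intro n
    have split : ∀ ℓ ∈ Finset.Icc 1 (k + 1),
        ((k + 1).choose ℓ : ℤ) * x ^ ((k + 1 - ℓ) * α) *
          (ε ^ n * ((n + ν).factorial : ℤ) *
            (((n : ℤ) + ν) ^ ℓ * x ^ (ℓ * α) + U ℓ) * x ^ (α * n + β))
        = ε ^ n * ((n + ν).factorial : ℤ) * x ^ (α * n + β) *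
            (x ^ ((k + 1) * α) * (((k + 1).choose ℓ : ℤ) * ((n : ℤ) + ν) ^ ℓ))
          + ε ^ n * ((n + ν).factorial : ℤ) * x ^ (α * n + β) *
            (((k + 1).choose ℓ : ℤ) * x ^ ((k + 1 - ℓ) * α) * U ℓ) := by
      intro ℓ hℓ
      have hle : ℓ ≤ k + 1 := (Finset.mem_Icc.mp hℓ).2
      have hpow : x ^ ((k + 1 - ℓ) * α) * x ^ (ℓ * α) = x ^ ((k + 1) * α) := by
        rw [← pow_add]
        congr 1
        have h1 : (k + 1 - ℓ) + ℓ = k + 1 := by omega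
        calc (k + 1 - ℓ) * α + ℓ * α = ((k + 1 - ℓ) + ℓ) * α := by ring
          _ = (k + 1) * α := by rw [h1]
      calc ((k + 1).choose ℓ : ℤ) * x ^ ((k + 1 - ℓ) * α) *
          (ε ^ n * ((n + ν).factorial : ℤ) *
            (((n : ℤ) + ν) ^ ℓ * x ^ (ℓ * α) + U ℓ) * x ^ (α * n + β))
          = ε ^ n * ((n + ν).factorial : ℤ) * x ^ (α * n + β) *
              ((x ^ ((k + 1 - ℓ) * α) * x ^ (ℓ * α)) * (((k + 1).choose ℓ : ℤ) * ((n : ℤ) + ν) ^ ℓ))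
            + ε ^ n * ((n + ν).factorial : ℤ) * x ^ (α * n + β) *
              (((k + 1).choose ℓ : ℤ) * x ^ ((k + 1 - ℓ) * α) * U ℓ) := by ring
        _ = _ := by rw [hpow]
    rw [Finset.sum_congr rfl split, Finset.sum_add_distrib, ← Finset.mul_sum, ← Finset.mul_sum,
      ← Finset.mul_sum, binom_aux', hUk, ← mul_add]
  rw [Finset.sum_congr rfl (fun n _ => inner n)]
  have tele : ∀ n : ℕ, ε ^ n * ((n + ν).factorial : ℤ) * x ^ (α * n + β) *
      (x ^ ((k + 1) * α) * ((((n : ℤ) + ν) + 1) ^ (k + 1) - 1)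
       + (ε * U k + x ^ ((k + 1) * α)))
      = (ε ^ ((n + 1) + 1) * (((n + 1) + ν).factorial : ℤ) * (((n + 1 : ℕ) : ℤ) + ν) ^ k * x ^ (k * α + α * (n + 1) + β)
         - ε ^ (n + 1) * ((n + ν).factorial : ℤ) * ((n : ℤ) + ν) ^ k * x ^ (k * α + α * n + β))
        + ε * (ε ^ n * ((n + ν).factorial : ℤ) *
          (((n : ℤ) + ν) ^ k * x ^ (k * α) + U k) * x ^ (α * n + β)) := by
    intro n
    have hfact : (((n + 1) + ν).factorial : ℤ) = (((n : ℤ) + ν) + 1) * ((n + ν).factorial : ℤ) := by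
      have h1 : (n + 1) + ν = (n + ν) + 1 := by omega
      rw [h1, Nat.factorial_succ]
      push_cast
      ring
    have hx1 : x ^ (k * α + α * (n + 1) + β) = x ^ ((k + 1) * α) * x ^ (α * n + β) := by
      rw [← pow_add]; congr 1; ring
    have hx2 : x ^ (k * α + α * n + β) = x ^ (k * α) * x ^ (α * n + β) := by
      rw [← pow_add]; congr 1; ring
    have he1 : ε ^ ((n + 1) + 1) = ε ^ n * (ε * ε) := by ring
    have he2 : ε ^ (n + 1) = ε ^ n * ε := by ring
    rw [hfact, hx1, hx2, he1, he2, hε2]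
    push_cast
    ring
  rw [Finset.sum_congr rfl (fun n _ => tele n), Finset.sum_add_distrib,
    Finset.sum_range_sub (fun n => ε ^ (n + 1) * ((n + ν).factorial : ℤ) * ((n : ℤ) + ν) ^ k * x ^ (k * α + α * n + β)),
    ← Finset.mul_sum]
  simp only [Nat.zero_add, Nat.cast_zero, zero_add, pow_one, Nat.mul_zero, Nat.add_zero, mul_zero, add_zero]
  ring

private lemma Rcombo' (ε : ℤ) (hε2 : ε * ε = 1) (ν β α : ℕ) (x : ℤ) (V : ℕ → ℤ) (A : ℕ → ℕ → ℤ)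
    (hV : ∀ k : ℕ, 1 ≤ k →
      (∑ ℓ ∈ Finset.Icc 1 (k + 1),
          ((k + 1).choose ℓ : ℤ) * x ^ ((k + 1 - ℓ) * α) * V (ℓ - 1)) -
        ε * V (k - 1) + ε * (ν.factorial : ℤ) * (ν : ℤ) ^ k * x ^ (k * α + β) = 0)
    (hA : ∀ k : ℕ, 1 ≤ k → ∀ N : ℕ,
      (∑ ℓ ∈ Finset.Icc 1 (k + 1),
          ((k + 1).choose ℓ : ℤ) * x ^ ((k + 1 - ℓ) * α) * A (ℓ - 1) N) -
        ε * A (k - 1) N - ((N : ℤ) + ν) ^ k * x ^ (k * α) = 0)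
    (k : ℕ) (hk : 1 ≤ k) (N : ℕ) (hN : 1 ≤ N) :
    (∑ ℓ ∈ Finset.Icc 1 (k + 1), ((k + 1).choose ℓ : ℤ) * x ^ ((k + 1 - ℓ) * α) *
        (V (ℓ - 1) + A (ℓ - 1) N * ε ^ (N - 1) * ((N + ν).factorial : ℤ) * x ^ (α * N + β)))
    = ε * (V (k - 1) + A (k - 1) N * ε ^ (N - 1) * ((N + ν).factorial : ℤ) * x ^ (α * N + β))
      + (ε ^ (N + 1) * ((N + ν).factorial : ℤ) * ((N : ℤ) + ν) ^ k * x ^ (k * α + α * N + β)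
         - ε * (ν.factorial : ℤ) * (ν : ℤ) ^ k * x ^ (k * α + β)) := by
  have hVk : (∑ ℓ ∈ Finset.Icc 1 (k + 1),
      ((k + 1).choose ℓ : ℤ) * x ^ ((k + 1 - ℓ) * α) * V (ℓ - 1))
      = ε * V (k - 1) - ε * (ν.factorial : ℤ) * (ν : ℤ) ^ k * x ^ (k * α + β) := by
    linarith [hV k hk]
  have hAk : (∑ ℓ ∈ Finset.Icc 1 (k + 1),
      ((k + 1).choose ℓ : ℤ) * x ^ ((k + 1 - ℓ) * α) * A (ℓ - 1) N)
      = ε * A (k - 1) N + ((N : ℤ) + ν) ^ k * x ^ (k * α) := by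
    linarith [hA k hk N]
  have split : ∀ ℓ ∈ Finset.Icc 1 (k + 1),
      ((k + 1).choose ℓ : ℤ) * x ^ ((k + 1 - ℓ) * α) *
        (V (ℓ - 1) + A (ℓ - 1) N * ε ^ (N - 1) * ((N + ν).factorial : ℤ) * x ^ (α * N + β))
      = ((k + 1).choose ℓ : ℤ) * x ^ ((k + 1 - ℓ) * α) * V (ℓ - 1)
        + (((k + 1).choose ℓ : ℤ) * x ^ ((k + 1 - ℓ) * α) * A (ℓ - 1) N) *
            (ε ^ (N - 1) * ((N + ν).factorial : ℤ) * x ^ (α * N + β)) := by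
    intro ℓ _; ring
  rw [Finset.sum_congr rfl split, Finset.sum_add_distrib, ← Finset.sum_mul, hVk, hAk]
  have hxp : x ^ (k * α + α * N + β) = x ^ (k * α) * x ^ (α * N + β) := by
    rw [← pow_add]; congr 1; ring
  have hep : ε ^ (N + 1) = ε ^ (N - 1) * (ε * ε) := by
    have h1 : N + 1 = (N - 1) + 1 + 1 := by omega
    rw [h1, pow_succ, pow_succ]; ring
  rw [hxp, hep, hε2]
  ring

theorem stmt_7 (ε : ℤ) (hε : ε = 1 ∨ ε = -1) (ν β : ℕ) (α : ℕ) (hα : 0 < α)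
    (x : ℤ) (U : ℕ → ℤ) (V : ℕ → ℤ) (A : ℕ → ℕ → ℤ)
    (hU1 : U 1 = x ^ α - ε)
    (hU : ∀ k : ℕ, 1 ≤ k →
      (∑ ℓ ∈ Finset.Icc 1 (k + 1),
          ((k + 1).choose ℓ : ℤ) * x ^ ((k + 1 - ℓ) * α) * U ℓ) -
        ε * U k - x ^ ((k + 1) * α) = 0)
    (hV0 : V 0 = -ε * (ν.factorial : ℤ) * x ^ β)
    (hV : ∀ k : ℕ, 1 ≤ k →
      (∑ ℓ ∈ Finset.Icc 1 (k + 1),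
          ((k + 1).choose ℓ : ℤ) * x ^ ((k + 1 - ℓ) * α) * V (ℓ - 1)) -
        ε * V (k - 1) + ε * (ν.factorial : ℤ) * (ν : ℤ) ^ k * x ^ (k * α + β) = 0)
    (hA0 : ∀ N : ℕ, A 0 N = 1)
    (hA : ∀ k : ℕ, 1 ≤ k → ∀ N : ℕ,
      (∑ ℓ ∈ Finset.Icc 1 (k + 1),
          ((k + 1).choose ℓ : ℤ) * x ^ ((k + 1 - ℓ) * α) * A (ℓ - 1) N) -
        ε * A (k - 1) N - ((N : ℤ) + ν) ^ k * x ^ (k * α) = 0) :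
    ∀ k : ℕ, 1 ≤ k → ∀ N : ℕ, 1 ≤ N →
      (∑ n ∈ Finset.range N,
          ε ^ n * ((n + ν).factorial : ℤ) *
            (((n : ℤ) + ν) ^ k * x ^ (k * α) + U k) * x ^ (α * n + β)) =
        V (k - 1) +
          A (k - 1) N * ε ^ (N - 1) * ((N + ν).factorial : ℤ) * x ^ (α * N + β) := by
  have hε2 : ε * ε = 1 := by rcases hε with h | h <;> simp [h]
  intro k
  induction k using Nat.strong_induction_on with
  | _ k IH =>
    intro hk N hN
    match k, hk with
    | 1, _ =>
      -- base case
      simp only [hU1, hV0, hA0, pow_one, one_mul]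
      have tele1 : ∀ n ∈ Finset.range N,
          ε ^ n * ((n + ν).factorial : ℤ) * (((n : ℤ) + ν) * x ^ α + (x ^ α - ε)) * x ^ (α * n + β)
          = ε ^ ((n + 1) + 1) * (((n + 1) + ν).factorial : ℤ) * x ^ (α * (n + 1) + β)
            - ε ^ (n + 1) * ((n + ν).factorial : ℤ) * x ^ (α * n + β) := by
        intro n _
        have hfact : (((n + 1) + ν).factorial : ℤ) = (((n : ℤ) + ν) + 1) * ((n + ν).factorial : ℤ) := by
          have h1 : (n + 1) + ν = (n + ν) + 1 := by omega
          rw [h1, Nat.factorial_succ]; push_cast; ring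
        have hx1 : x ^ (α * (n + 1) + β) = x ^ α * x ^ (α * n + β) := by
          rw [← pow_add]; congr 1; ring
        have he1 : ε ^ ((n + 1) + 1) = ε ^ n * (ε * ε) := by ring
        have he2 : ε ^ (n + 1) = ε ^ n * ε := by ring
        rw [hfact, hx1, he1, he2, hε2]
        ring
      rw [Finset.sum_congr rfl tele1,
        Finset.sum_range_sub (fun n => ε ^ (n + 1) * ((n + ν).factorial : ℤ) * x ^ (α * n + β))]
      have hep : ε ^ (N + 1) = ε ^ (N - 1) * (ε * ε) := by
        have h1 : N + 1 = (N - 1) + 1 + 1 := by omega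
        rw [h1, pow_succ, pow_succ]; ring
      simp only [Nat.zero_add, Nat.mul_zero, zero_add, pow_one]
      rw [hep, hε2]
      ring
    | (m + 2), _ =>
      have hm : 1 ≤ m + 1 := by omega
      have hL := Lcombo' ε hε2 ν β α x U hU (m + 1) hm N
      have hR := Rcombo' ε hε2 ν β α x V A hV hA (m + 1) hm N hN
      have hmid : (∑ n ∈ Finset.range N,
          ε ^ n * ((n + ν).factorial : ℤ) *
            (((n : ℤ) + ν) ^ (m + 1) * x ^ ((m + 1) * α) + U (m + 1)) * x ^ (α * n + β)) =
          V (m + 1 - 1) +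
            A (m + 1 - 1) N * ε ^ (N - 1) * ((N + ν).factorial : ℤ) * x ^ (α * N + β) :=
        IH (m + 1) (by omega) hm N hN
      have hsum : (∑ ℓ ∈ Finset.Icc 1 (m + 1 + 1), ((m + 1 + 1).choose ℓ : ℤ) * x ^ ((m + 1 + 1 - ℓ) * α) *
            (∑ n ∈ Finset.range N, ε ^ n * ((n + ν).factorial : ℤ) *
              (((n : ℤ) + ν) ^ ℓ * x ^ (ℓ * α) + U ℓ) * x ^ (α * n + β)))
          = (∑ ℓ ∈ Finset.Icc 1 (m + 1 + 1), ((m + 1 + 1).choose ℓ : ℤ) * x ^ ((m + 1 + 1 - ℓ) * α) *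
            (V (ℓ - 1) + A (ℓ - 1) N * ε ^ (N - 1) * ((N + ν).factorial : ℤ) * x ^ (α * N + β))) := by
        rw [hL, hR, hmid]
      have hins : Finset.Icc 1 (m + 1 + 1) = insert (m + 1 + 1) (Finset.Icc 1 (m + 1)) := by
        ext a
        simp only [Finset.mem_Icc, Finset.mem_insert]
        omega
      rw [hins, Finset.sum_insert (by simp), Finset.sum_insert (by simp)] at hsum
      have htail : (∑ ℓ ∈ Finset.Icc 1 (m + 1), ((m + 1 + 1).choose ℓ : ℤ) * x ^ ((m + 1 + 1 - ℓ) * α) *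
            (∑ n ∈ Finset.range N, ε ^ n * ((n + ν).factorial : ℤ) *
              (((n : ℤ) + ν) ^ ℓ * x ^ (ℓ * α) + U ℓ) * x ^ (α * n + β)))
          = (∑ ℓ ∈ Finset.Icc 1 (m + 1), ((m + 1 + 1).choose ℓ : ℤ) * x ^ ((m + 1 + 1 - ℓ) * α) *
            (V (ℓ - 1) + A (ℓ - 1) N * ε ^ (N - 1) * ((N + ν).factorial : ℤ) * x ^ (α * N + β))) := by
        refine Finset.sum_congr rfl (fun ℓ hℓ => ?_)
        have hℓ' := Finset.mem_Icc.mp hℓ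
        rw [IH ℓ (by omega) (by omega) N hN]
      have hcoef : ((m + 1 + 1).choose (m + 1 + 1) : ℤ) * x ^ ((m + 1 + 1 - (m + 1 + 1)) * α) = 1 := by
        simp
      rw [hcoef, one_mul, one_mul, htail] at hsum
      have := add_right_cancel hsum
      exact this
end

section
/- Let ε ∈ {1, −1}, let ν be a nonnegative integer, let α be a positive integer, and let x ∈ ℤ. Suppose U : ℕ → ℤ satisfies the U-recurrence and A : ℕ × ℕ → ℤ satisfies the A-recurrence. Then for every k ≥ 1 and every N ≥ 1 the identity (N+ν−1)^k·x^{kα} + U(k) = (N+ν)·x^α·A(k−1, N) − ε·A(k−1, N−1) holds in ℤ. -/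
theorem stmt_8 (ε : ℤ) (hε : ε = 1 ∨ ε = -1) (ν : ℕ) (α : ℕ) (hα : 0 < α)
    (x : ℤ) (U : ℕ → ℤ) (A : ℕ → ℕ → ℤ)
    (hU1 : U 1 = x ^ α - ε)
    (hU : ∀ k : ℕ, 1 ≤ k →
      (∑ ℓ ∈ Finset.Icc 1 (k + 1),
          ((k + 1).choose ℓ : ℤ) * x ^ ((k + 1 - ℓ) * α) * U ℓ) -
        ε * U k - x ^ ((k + 1) * α) = 0)
    (hA0 : ∀ N : ℕ, A 0 N = 1)
    (hA : ∀ k : ℕ, 1 ≤ k → ∀ N : ℕ,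
      (∑ ℓ ∈ Finset.Icc 1 (k + 1),
          ((k + 1).choose ℓ : ℤ) * x ^ ((k + 1 - ℓ) * α) * A (ℓ - 1) N) -
        ε * A (k - 1) N - ((N : ℤ) + ν) ^ k * x ^ (k * α) = 0) :
    ∀ k : ℕ, 1 ≤ k → ∀ N : ℕ, 1 ≤ N →
      ((N : ℤ) + ν - 1) ^ k * x ^ (k * α) + U k =
        ((N : ℤ) + ν) * x ^ α * A (k - 1) N - ε * A (k - 1) (N - 1) := by
  set y : ℤ := x ^ α with hy
  have hxp : ∀ j : ℕ, x ^ (j * α) = y ^ j := by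
    intro j; rw [Nat.mul_comm, pow_mul, ← hy]
  intro k
  induction k using Nat.strong_induction_on with
  | _ k IH =>
    intro hk N hN
    have hcast : ((N - 1 : ℕ) : ℤ) = (N : ℤ) - 1 := by omega
    match k, hk with
    | 1, _ =>
      simp only [hxp, hU1, hA0, pow_one, show (1:ℕ) - 1 = 0 from rfl]
      ring
    | (n+2), _ =>
      simp only [hxp, show n + 2 - 1 = n + 1 from rfl]
      -- U recurrence at n+1
      have HU := hU (n+1) (by omega)
      simp only [show n + 1 + 1 = n + 2 from rfl, hxp] at HU
      rw [Finset.sum_Icc_succ_top (show (1:ℕ) ≤ n + 2 by omega)] at HU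
      simp only [Nat.choose_self, Nat.cast_one, Nat.sub_self, pow_zero, one_mul, mul_one] at HU
      -- A recurrence at n+1, N
      have HAN := hA (n+1) (by omega) N
      simp only [show n + 1 + 1 = n + 2 from rfl, show n + 1 - 1 = n from rfl, hxp] at HAN
      rw [Finset.sum_Icc_succ_top (show (1:ℕ) ≤ n + 2 by omega)] at HAN
      simp only [Nat.choose_self, Nat.cast_one, Nat.sub_self, pow_zero, one_mul, mul_one,
        show n + 2 - 1 = n + 1 from rfl] at HAN
      -- A recurrence at n+1, N-1
      have HAM := hA (n+1) (by omega) (N-1)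
      simp only [show n + 1 + 1 = n + 2 from rfl, show n + 1 - 1 = n from rfl, hxp, hcast] at HAM
      rw [Finset.sum_Icc_succ_top (show (1:ℕ) ≤ n + 2 by omega)] at HAM
      simp only [Nat.choose_self, Nat.cast_one, Nat.sub_self, pow_zero, one_mul, mul_one,
        show n + 2 - 1 = n + 1 from rfl] at HAM
      rw [show (N:ℤ) - 1 + ν = (N:ℤ) + ν - 1 from by ring] at HAM
      -- binomial identity
      have hbin : (∑ ℓ ∈ Finset.Icc 1 (n+2), ((N:ℤ) + ν - 1) ^ ℓ * ((n+2).choose ℓ : ℤ))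
          = ((N:ℤ) + ν) ^ (n+2) - 1 := by
        have h := add_pow ((N:ℤ) + ν - 1) 1 (n+2)
        simp only [one_pow, mul_one] at h
        rw [show (N:ℤ) + ν - 1 + 1 = (N:ℤ) + ν from by ring,
          show Finset.range (n+3) = insert 0 (Finset.Icc 1 (n+2)) from by
            ext a; simp [Finset.mem_Icc]; omega,
          Finset.sum_insert (by simp)] at h
        simp only [pow_zero, Nat.choose_zero_right, Nat.cast_one, one_mul] at h
        linarith
      rw [Finset.sum_Icc_succ_top (show (1:ℕ) ≤ n + 2 by omega)] at hbin
      simp only [Nat.choose_self, Nat.cast_one, mul_one] at hbin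
      -- induction hypothesis at n+1
      have ihn := IH (n+1) (by omega) (by omega) N hN
      simp only [hxp, show n + 1 - 1 = n from rfl] at ihn
      -- summed induction hypothesis
      have G : ∑ ℓ ∈ Finset.Icc 1 (n+1),
            (((N:ℤ) + ν - 1) ^ ℓ * ((n+2).choose ℓ : ℤ) * y ^ (n+2)
              + ((n+2).choose ℓ : ℤ) * y ^ (n+2-ℓ) * U ℓ)
          = ∑ ℓ ∈ Finset.Icc 1 (n+1),
            (((N:ℤ) + ν) * y * (((n+2).choose ℓ : ℤ) * y ^ (n+2-ℓ) * A (ℓ-1) N)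
              - ε * (((n+2).choose ℓ : ℤ) * y ^ (n+2-ℓ) * A (ℓ-1) (N-1))) := by
        refine Finset.sum_congr rfl (fun ℓ hℓ => ?_)
        obtain ⟨hℓ1, hℓ2⟩ := Finset.mem_Icc.mp hℓ
        have hih := IH ℓ (by omega) hℓ1 N hN
        simp only [hxp] at hih
        have hp : y ^ (n+2-ℓ) * y ^ ℓ = y ^ (n+2) := by
          rw [← pow_add]; congr 1; omega
        linear_combination (((n+2).choose ℓ : ℤ) * y ^ (n+2-ℓ)) * hih
          - (((N:ℤ) + ν - 1) ^ ℓ * ((n+2).choose ℓ : ℤ)) * hp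
      rw [Finset.sum_add_distrib, Finset.sum_sub_distrib, ← Finset.sum_mul,
        ← Finset.mul_sum, ← Finset.mul_sum] at G
      linear_combination HU - ((N:ℤ) + ν) * y * HAN + ε * HAM + y ^ (n+2) * hbin - G + ε * ihn
end

section
/- Let ε ∈ {1, −1}, let ν be a nonnegative integer, let α be a positive integer, and let x ∈ ℤ. Suppose U : ℕ → ℤ satisfies the U-recurrence and A : ℕ × ℕ → ℤ satisfies the A-recurrence. Then for every k ≥ 1 the identity U(k) = (ν+1)·x^α·A(k−1, 1) − ε·A(k−1, 0) − ν^k·x^{kα} holds in ℤ. -/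
lemma aux_binom (y : ℤ) (n : ℕ) :
    ∑ ℓ ∈ Finset.Icc 1 (n + 1), ((n + 1).choose ℓ : ℤ) * y ^ ℓ = (y + 1) ^ (n + 1) - 1 := by
  have h := add_pow y 1 (n + 1)
  simp only [one_pow, mul_one] at h
  rw [Finset.range_eq_Ico, Finset.sum_eq_sum_Ico_succ_bot (by omega : 0 < n + 2)] at h
  have : Finset.Ico 1 (n + 2) = Finset.Icc 1 (n + 1) := rfl
  rw [this] at h
  simp only [pow_zero, Nat.choose_zero_right, Nat.cast_one, one_mul] at h
  have : ∑ ℓ ∈ Finset.Icc 1 (n + 1), y ^ ℓ * ((n + 1).choose ℓ : ℤ) =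
      ∑ ℓ ∈ Finset.Icc 1 (n + 1), ((n + 1).choose ℓ : ℤ) * y ^ ℓ := by
    apply Finset.sum_congr rfl; intro ℓ _; ring
  rw [this] at h
  linarith

theorem stmt_9 (ε : ℤ) (hε : ε = 1 ∨ ε = -1) (ν : ℕ) (α : ℕ) (hα : 0 < α)
    (x : ℤ) (U : ℕ → ℤ) (A : ℕ → ℕ → ℤ)
    (hU1 : U 1 = x ^ α - ε)
    (hU : ∀ k : ℕ, 1 ≤ k →
      (∑ ℓ ∈ Finset.Icc 1 (k + 1),
          ((k + 1).choose ℓ : ℤ) * x ^ ((k + 1 - ℓ) * α) * U ℓ) -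
        ε * U k - x ^ ((k + 1) * α) = 0)
    (hA0 : ∀ N : ℕ, A 0 N = 1)
    (hA : ∀ k : ℕ, 1 ≤ k → ∀ N : ℕ,
      (∑ ℓ ∈ Finset.Icc 1 (k + 1),
          ((k + 1).choose ℓ : ℤ) * x ^ ((k + 1 - ℓ) * α) * A (ℓ - 1) N) -
        ε * A (k - 1) N - ((N : ℤ) + ν) ^ k * x ^ (k * α) = 0) :
    ∀ k : ℕ, 1 ≤ k →
      U k = ((ν : ℤ) + 1) * x ^ α * A (k - 1) 1 - ε * A (k - 1) 0 -
        (ν : ℤ) ^ k * x ^ (k * α) := by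
  have hε2 : ε * ε = 1 := by rcases hε with h | h <;> simp [h]
  set V : ℕ → ℤ := fun k =>
    ((ν : ℤ) + 1) * x ^ α * A (k - 1) 1 - ε * A (k - 1) 0 -
      (ν : ℤ) ^ k * x ^ (k * α) with hV
  -- V satisfies the same recurrence
  have hVrec : ∀ k : ℕ, 1 ≤ k →
      (∑ ℓ ∈ Finset.Icc 1 (k + 1),
          ((k + 1).choose ℓ : ℤ) * x ^ ((k + 1 - ℓ) * α) * V ℓ) -
        ε * V k - x ^ ((k + 1) * α) = 0 := by
    intro k hk
    have split : ∀ ℓ ∈ Finset.Icc 1 (k + 1),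
        ((k + 1).choose ℓ : ℤ) * x ^ ((k + 1 - ℓ) * α) * V ℓ =
          ((ν : ℤ) + 1) * x ^ α *
            (((k + 1).choose ℓ : ℤ) * x ^ ((k + 1 - ℓ) * α) * A (ℓ - 1) 1) -
          ε * (((k + 1).choose ℓ : ℤ) * x ^ ((k + 1 - ℓ) * α) * A (ℓ - 1) 0) -
          (((k + 1).choose ℓ : ℤ) * (ν : ℤ) ^ ℓ) * x ^ ((k + 1) * α) := by
      intro ℓ hℓ
      simp only [Finset.mem_Icc] at hℓ
      have hx : x ^ ((k + 1 - ℓ) * α) * x ^ (ℓ * α) = x ^ ((k + 1) * α) := by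
        rw [← pow_add]
        congr 1
        have h : k + 1 - ℓ + ℓ = k + 1 := by omega
        rw [← Nat.add_mul, h]
      simp only [hV]
      rw [← hx]
      ring
    rw [Finset.sum_congr rfl split]
    simp only [Finset.sum_sub_distrib, ← Finset.mul_sum, ← Finset.sum_mul]
    have h1 := hA k hk 1
    have h0 := hA k hk 0
    push_cast at h1 h0
    have hb := aux_binom (ν : ℤ) k
    have e1 : (∑ ℓ ∈ Finset.Icc 1 (k + 1),
        ((k + 1).choose ℓ : ℤ) * x ^ ((k + 1 - ℓ) * α) * A (ℓ - 1) 1) =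
        ε * A (k - 1) 1 + ((1 : ℤ) + ν) ^ k * x ^ (k * α) := by linarith
    have e0 : (∑ ℓ ∈ Finset.Icc 1 (k + 1),
        ((k + 1).choose ℓ : ℤ) * x ^ ((k + 1 - ℓ) * α) * A (ℓ - 1) 0) =
        ε * A (k - 1) 0 + (ν : ℤ) ^ k * x ^ (k * α) := by
      simp only [zero_add] at h0
      linarith
    rw [e1, e0, hb]
    simp only [hV]
    have hR : x ^ ((k + 1) * α) = x ^ α * x ^ (k * α) := by
      rw [← pow_add]; congr 1; ring
    have hC : ((ν : ℤ) + 1) ^ (k + 1) = ((ν : ℤ) + 1) * ((1 : ℤ) + ν) ^ k := by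
      rw [pow_succ]; ring
    rw [hR, hC]
    ring
  -- strong induction
  intro k
  induction k using Nat.strong_induction_on with
  | _ k ih =>
    intro hk
    match k, hk with
    | 1, _ =>
      simp only [hU1, Nat.sub_self, hA0, pow_one, one_mul]
      push_cast
      ring
    | (n + 2), _ =>
      have hn : 1 ≤ n + 1 := by omega
      have hu := hU (n + 1) hn
      have hv := hVrec (n + 1) hn
      -- split off the top term ℓ = n + 2
      have hsplit : ∀ f : ℕ → ℤ,
          (∑ ℓ ∈ Finset.Icc 1 (n + 1 + 1),
            ((n + 1 + 1).choose ℓ : ℤ) * x ^ ((n + 1 + 1 - ℓ) * α) * f ℓ) =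
          (∑ ℓ ∈ Finset.Icc 1 (n + 1),
            ((n + 1 + 1).choose ℓ : ℤ) * x ^ ((n + 1 + 1 - ℓ) * α) * f ℓ) +
            f (n + 1 + 1) := by
        intro f
        rw [Finset.sum_Icc_succ_top (by omega : 1 ≤ n + 1 + 1)]
        simp
      rw [hsplit] at hu hv
      have heq : ∀ ℓ ∈ Finset.Icc 1 (n + 1),
          ((n + 1 + 1).choose ℓ : ℤ) * x ^ ((n + 1 + 1 - ℓ) * α) * U ℓ =
          ((n + 1 + 1).choose ℓ : ℤ) * x ^ ((n + 1 + 1 - ℓ) * α) * V ℓ := by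
        intro ℓ hℓ
        simp only [Finset.mem_Icc] at hℓ
        have hUV : U ℓ = V ℓ := ih ℓ (by omega) hℓ.1
        rw [hUV]
      have ihV : U (n + 1) = V (n + 1) := ih (n + 1) (by omega) hn
      rw [Finset.sum_congr rfl heq, ihV] at hu
      show U (n + 1 + 1) = V (n + 1 + 1)
      linarith [hu, hv]
end

section
/- Let ε ∈ {1, −1}, let ν, β be nonnegative integers, let α be a positive integer, and let x ∈ ℤ. Suppose U : ℕ → ℤ satisfies the U-recurrence, V : ℕ → ℤ satisfies the V-recurrence, and A : ℕ × ℕ → ℤ satisfies the A-recurrence. Then for every k ≥ 1 the identity V(k−1) = −ε·ν!·x^β·A(k−1, 0) holds in ℤ. -/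
theorem stmt_10 (ε : ℤ) (hε : ε = 1 ∨ ε = -1) (ν β : ℕ) (α : ℕ) (hα : 0 < α)
    (x : ℤ) (U : ℕ → ℤ) (V : ℕ → ℤ) (A : ℕ → ℕ → ℤ)
    (hU1 : U 1 = x ^ α - ε)
    (hU : ∀ k : ℕ, 1 ≤ k →
      (∑ ℓ ∈ Finset.Icc 1 (k + 1),
          ((k + 1).choose ℓ : ℤ) * x ^ ((k + 1 - ℓ) * α) * U ℓ) -
        ε * U k - x ^ ((k + 1) * α) = 0)
    (hV0 : V 0 = -ε * (ν.factorial : ℤ) * x ^ β)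
    (hV : ∀ k : ℕ, 1 ≤ k →
      (∑ ℓ ∈ Finset.Icc 1 (k + 1),
          ((k + 1).choose ℓ : ℤ) * x ^ ((k + 1 - ℓ) * α) * V (ℓ - 1)) -
        ε * V (k - 1) + ε * (ν.factorial : ℤ) * (ν : ℤ) ^ k * x ^ (k * α + β) = 0)
    (hA0 : ∀ N : ℕ, A 0 N = 1)
    (hA : ∀ k : ℕ, 1 ≤ k → ∀ N : ℕ,
      (∑ ℓ ∈ Finset.Icc 1 (k + 1),
          ((k + 1).choose ℓ : ℤ) * x ^ ((k + 1 - ℓ) * α) * A (ℓ - 1) N) -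
        ε * A (k - 1) N - ((N : ℤ) + ν) ^ k * x ^ (k * α) = 0) :
    ∀ k : ℕ, 1 ≤ k →
      V (k - 1) = -ε * (ν.factorial : ℤ) * x ^ β * A (k - 1) 0 := by
  have key : ∀ k : ℕ, V k = -ε * (ν.factorial : ℤ) * x ^ β * A k 0 := by
    intro k
    induction k using Nat.strong_induction_on with
    | _ k ih =>
      match k with
      | 0 => rw [hV0, hA0]; ring
      | (n + 1) =>
        have h1 := hV (n + 1) (by omega)
        have h2 := hA (n + 1) (by omega) 0
        rw [Finset.sum_Icc_succ_top (by omega)] at h1 h2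
        have hsum : (∑ ℓ ∈ Finset.Icc 1 (n + 1),
            ((n + 1 + 1).choose ℓ : ℤ) * x ^ ((n + 1 + 1 - ℓ) * α) * V (ℓ - 1))
            = -ε * (ν.factorial : ℤ) * x ^ β * ∑ ℓ ∈ Finset.Icc 1 (n + 1),
              ((n + 1 + 1).choose ℓ : ℤ) * x ^ ((n + 1 + 1 - ℓ) * α) * A (ℓ - 1) 0 := by
          rw [Finset.mul_sum]
          apply Finset.sum_congr rfl
          intro ℓ hℓ
          have hℓ' := Finset.mem_Icc.mp hℓ
          rw [ih (ℓ - 1) (by omega)]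
          ring
        rw [hsum] at h1
        have hn : V n = -ε * (ν.factorial : ℤ) * x ^ β * A n 0 := ih n (by omega)
        simp only [Nat.add_sub_cancel, Nat.choose_self, Nat.cast_one, Nat.sub_self,
          Nat.zero_mul, pow_zero, one_mul, mul_one, Nat.cast_zero, zero_add] at h1 h2 ⊢
        linear_combination h1 - (-ε * (ν.factorial : ℤ) * x ^ β) * h2 + ε * hn
  intro k hk
  exact key (k - 1)
end

section
/- Let ε ∈ {1, −1}, let ν, β be nonnegative integers, let α be a positive integer, and let x ∈ ℤ. Suppose U : ℕ → ℤ satisfies the U-recurrence and V : ℕ → ℤ satisfies the V-recurrence. Then for every k ≥ 1 and every prime p, the function n ↦ ε^n·(n+ν)!·[(n+ν)^k·x^{kα} + U(k)]·x^{αn+β}, with values viewed in ℚ_p, has sum V(k−1) in ℚ_p; in particular the sum is the same integer for every prime p. -/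
open Filter Topology

lemma pow_div_dvd_factorial (p n : ℕ) (hp : p.Prime) : p ^ (n / p) ∣ n.factorial := by
  rw [Nat.Prime.pow_dvd_factorial_iff hp (Nat.lt_succ_self _)]
  rcases Nat.lt_or_ge (n / p) 1 with h | h
  · omega
  · calc n / p = n / p ^ 1 := by rw [pow_one]
      _ ≤ ∑ i ∈ Finset.Ico 1 (Nat.log p n + 1), n / p ^ i :=
        Finset.single_le_sum (f := fun i => n / p ^ i) (fun _ _ => Nat.zero_le _)
          (by
            simp only [Finset.mem_Ico, Nat.lt_succ_iff]
            have hpn : p ≤ n := (Nat.one_le_div_iff hp.pos).mp h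
            exact ⟨le_refl 1, Nat.log_pos hp.one_lt hpn⟩)

lemma norm_factorial_le (p : ℕ) [hp : Fact p.Prime] (n : ℕ) :
    ‖((n.factorial : ℤ) : ℚ_[p])‖ ≤ ((p : ℝ)⁻¹) ^ (n / p) := by
  obtain ⟨m, hm⟩ := pow_div_dvd_factorial p n hp.out
  have h2 : ((n.factorial : ℤ) : ℚ_[p]) = (p : ℚ_[p]) ^ (n / p) * ((m : ℤ) : ℚ_[p]) := by
    push_cast [hm]; ring
  rw [h2, norm_mul, norm_pow, Padic.norm_p]
  calc (p : ℝ)⁻¹ ^ (n/p) * ‖((m : ℤ) : ℚ_[p])‖ ≤ (p : ℝ)⁻¹ ^ (n/p) * 1 := by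
        exact mul_le_mul_of_nonneg_left (Padic.norm_int_le_one _) (by positivity)
    _ = (p : ℝ)⁻¹ ^ (n/p) := mul_one _

lemma tendsto_coeff_factorial (p : ℕ) [hp : Fact p.Prime] (ν : ℕ) (c : ℕ → ℤ) :
    Filter.Tendsto (fun n : ℕ => ((c n * ((n + ν).factorial : ℤ) : ℤ) : ℚ_[p])) atTop (𝓝 0) := by
  rw [tendsto_zero_iff_norm_tendsto_zero]
  have hb : Filter.Tendsto (fun n : ℕ => ((p : ℝ)⁻¹) ^ ((n + ν) / p)) atTop (𝓝 0) := by
    have h1 : Filter.Tendsto (fun m : ℕ => ((p : ℝ)⁻¹) ^ m) atTop (𝓝 0) := by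
      apply tendsto_pow_atTop_nhds_zero_of_lt_one
      · positivity
      · rw [inv_lt_one_iff₀]
        right
        exact_mod_cast hp.out.one_lt
    have h2 : Filter.Tendsto (fun n : ℕ => (n + ν) / p) atTop atTop := by
      apply Filter.tendsto_atTop_atTop.mpr
      intro b
      refine ⟨p * b, fun n hn => ?_⟩
      rw [Nat.le_div_iff_mul_le hp.out.pos]
      calc b * p = p * b := mul_comm _ _
        _ ≤ n := hn
        _ ≤ n + ν := Nat.le_add_right _ _
    exact h1.comp h2
  apply squeeze_zero (fun n => norm_nonneg _) _ hb
  intro n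
  have : ((c n * ((n + ν).factorial : ℤ) : ℤ) : ℚ_[p]) =
      ((c n : ℤ) : ℚ_[p]) * (((n + ν).factorial : ℤ) : ℚ_[p]) := by push_cast; ring
  rw [this, norm_mul]
  calc ‖((c n : ℤ) : ℚ_[p])‖ * ‖(((n + ν).factorial : ℤ) : ℚ_[p])‖
      ≤ 1 * (((p : ℝ)⁻¹) ^ ((n + ν) / p)) :=
        mul_le_mul (Padic.norm_int_le_one _) (norm_factorial_le p _) (norm_nonneg _) zero_le_one
    _ = ((p : ℝ)⁻¹) ^ ((n + ν) / p) := one_mul _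

lemma hasSum_of_tendsto_of_partial (p : ℕ) [hp : Fact p.Prime] (f : ℕ → ℚ_[p]) (S : ℚ_[p])
    (h0 : Filter.Tendsto f atTop (𝓝 0))
    (hps : Filter.Tendsto (fun N => ∑ n ∈ Finset.range N, f n) atTop (𝓝 S)) :
    HasSum f S := by
  have hsum : Summable f :=
    NonarchimedeanAddGroup.summable_of_tendsto_cofinite_zero (by rwa [Nat.cofinite_eq_atTop])
  obtain ⟨S', hS'⟩ := hsum
  have := hS'.tendsto_sum_nat
  rwa [tendsto_nhds_unique hps this]

lemma hasSum_telescope (p : ℕ) [hp : Fact p.Prime] (g : ℕ → ℚ_[p])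
    (h0 : Filter.Tendsto g atTop (𝓝 0)) :
    HasSum (fun n => g (n + 1) - g n) (-g 0) := by
  apply hasSum_of_tendsto_of_partial p _ _ (by simpa using h0.comp (tendsto_add_atTop_nat 1) |>.sub h0)
  have : (fun N => ∑ n ∈ Finset.range N, (g (n + 1) - g n)) = fun N => g N - g 0 := by
    funext N; exact Finset.sum_range_sub g N
  rw [this]
  simpa using h0.sub (tendsto_const_nhds (x := g 0))

open Filter Topology

-- the summand and the telescoping auxiliary sequence
def Tt (ε : ℤ) (ν β α : ℕ) (x : ℤ) (U : ℕ → ℤ) (k n : ℕ) : ℤ :=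
  ε ^ n * ((n + ν).factorial : ℤ) * (((n : ℤ) + ν) ^ k * x ^ (k * α) + U k) * x ^ (α * n + β)

def Gg (ε : ℤ) (ν β α : ℕ) (x : ℤ) (n : ℕ) : ℤ :=
  ε ^ (n + 1) * ((n + ν).factorial : ℤ) * x ^ (α * n + β)

lemma binom_sum (y : ℤ) (k : ℕ) :
    ∑ ℓ ∈ Finset.Icc 1 (k + 1), ((k + 1).choose ℓ : ℤ) * y ^ ℓ = (y + 1) ^ (k + 1) - 1 := by
  have h := add_pow y 1 (k + 1)
  simp only [one_pow, mul_one] at h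
  rw [h]
  rw [Finset.range_eq_Ico, ← Finset.Ico_add_one_right_eq_Icc,
    Finset.sum_eq_sum_Ico_succ_bot (by omega : 0 < k + 1 + 1) (fun i => y ^ i * ((k + 1).choose i : ℤ))]
  simp only [pow_zero, Nat.choose_zero_right, Nat.cast_one, one_mul]
  rw [add_sub_cancel_left]
  exact Finset.sum_congr rfl (fun i _ => mul_comm _ _)

example (ε : ℤ) (hε2 : ε * ε = 1) (n : ℕ) : ε ^ (n + 2) = ε ^ n := by
  rw [pow_succ, pow_succ, mul_assoc, hε2, mul_one]

lemma idsum (ε : ℤ) (hε2 : ε * ε = 1) (ν β α : ℕ) (x : ℤ) (U : ℕ → ℤ) (k : ℕ)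
    (hUk : (∑ ℓ ∈ Finset.Icc 1 (k + 1), ((k + 1).choose ℓ : ℤ) * x ^ ((k + 1 - ℓ) * α) * U ℓ)
      = ε * U k + x ^ ((k + 1) * α)) (n : ℕ) :
    ∑ ℓ ∈ Finset.Icc 1 (k + 1), ((k + 1).choose ℓ : ℤ) * x ^ ((k + 1 - ℓ) * α) * Tt ε ν β α x U ℓ n
      = ε * Tt ε ν β α x U k (n + 1)
        - U k * (Gg ε ν β α x (n + 1) - Gg ε ν β α x n) := by
  have hstep : ∀ ℓ ∈ Finset.Icc 1 (k + 1),
      ((k + 1).choose ℓ : ℤ) * x ^ ((k + 1 - ℓ) * α) * Tt ε ν β α x U ℓ n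
        = (ε ^ n * ((n + ν).factorial : ℤ) * x ^ (α * n + β) * x ^ ((k + 1) * α))
            * (((k + 1).choose ℓ : ℤ) * ((n : ℤ) + ν) ^ ℓ)
          + (((k + 1).choose ℓ : ℤ) * x ^ ((k + 1 - ℓ) * α) * U ℓ)
            * (ε ^ n * ((n + ν).factorial : ℤ) * x ^ (α * n + β)) := by
    intro ℓ hℓ
    have hℓ2 := (Finset.mem_Icc.mp hℓ).2
    have hpow : x ^ ((k + 1 - ℓ) * α) * x ^ (ℓ * α) = x ^ ((k + 1) * α) := by
      rw [← pow_add, ← add_mul, Nat.sub_add_cancel hℓ2]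
    unfold Tt
    linear_combination (((k + 1).choose ℓ : ℤ) * ε ^ n * ((n + ν).factorial : ℤ)
      * ((n : ℤ) + ν) ^ ℓ * x ^ (α * n + β)) * hpow
  rw [Finset.sum_congr rfl hstep, Finset.sum_add_distrib, ← Finset.mul_sum, ← Finset.sum_mul,
    binom_sum, hUk]
  unfold Tt Gg
  have hf : n + 1 + ν = (n + ν) + 1 := by omega
  rw [hf, Nat.factorial_succ]
  have he1 : α * (n + 1) + β = (α * n + β) + α := by ring
  have he2 : (k + 1) * α = k * α + α := by ring
  rw [he1, he2, pow_add, pow_add, pow_succ ε (n + 1), pow_succ ε n,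
    pow_succ ((n : ℤ) + ν + 1) k]
  push_cast
  linear_combination (-(ε ^ n * ((n + ν).factorial : ℤ)) * ((n : ℤ) + ν + 1) ^ k
    * ((n : ℤ) + ν + 1) * x ^ (k * α) * x ^ α * x ^ (α * n + β)) * hε2

lemma base_id (ε : ℤ) (hε2 : ε * ε = 1) (ν β α : ℕ) (x : ℤ) (U : ℕ → ℤ)
    (hU1 : U 1 = x ^ α - ε) (n : ℕ) :
    Tt ε ν β α x U 1 n = Gg ε ν β α x (n + 1) - Gg ε ν β α x n := by
  unfold Tt Gg
  have hf : n + 1 + ν = (n + ν) + 1 := by omega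
  have he1 : α * (n + 1) + β = (α * n + β) + α := by ring
  rw [hf, Nat.factorial_succ, he1, pow_add, hU1, pow_one, one_mul,
    pow_succ ε (n + 1), pow_succ ε n]
  push_cast
  linear_combination (-(ε ^ n * ((n + ν).factorial : ℤ)) * ((n : ℤ) + ν + 1)
    * x ^ (α * n + β) * x ^ α) * hε2

lemma val_id (ε : ℤ) (hε2 : ε * ε = 1) (ν β α : ℕ) (x : ℤ) (U V : ℕ → ℤ) (k : ℕ) (hk : 1 ≤ k)
    (hVk : (∑ ℓ ∈ Finset.Icc 1 (k + 1),
        ((k + 1).choose ℓ : ℤ) * x ^ ((k + 1 - ℓ) * α) * V (ℓ - 1)) -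
      ε * V (k - 1) + ε * (ν.factorial : ℤ) * (ν : ℤ) ^ k * x ^ (k * α + β) = 0) :
    ε * ((V (k - 1) : ℤ) - Tt ε ν β α x U k 0) - U k * (-(Gg ε ν β α x 0))
      - ∑ ℓ ∈ Finset.Icc 1 k, ((k + 1).choose ℓ : ℤ) * x ^ ((k + 1 - ℓ) * α) * V (ℓ - 1)
      = V k := by
  rw [Finset.sum_Icc_succ_top (by omega : 1 ≤ k + 1)] at hVk
  simp only [Nat.choose_self, Nat.cast_one, Nat.sub_self, zero_mul, pow_zero, one_mul,
    mul_one] at hVk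
  unfold Tt Gg
  simp only [pow_zero, Nat.zero_add, zero_add, Nat.cast_zero, mul_zero, one_mul, pow_one,
    Nat.add_sub_cancel] at *
  rw [pow_add] at hVk
  linear_combination (-1 : ℤ) * hVk

theorem stmt_11 (ε : ℤ) (hε : ε = 1 ∨ ε = -1) (ν β : ℕ) (α : ℕ) (hα : 0 < α)
    (x : ℤ) (U : ℕ → ℤ) (V : ℕ → ℤ)
    (hU1 : U 1 = x ^ α - ε)
    (hU : ∀ k : ℕ, 1 ≤ k →
      (∑ ℓ ∈ Finset.Icc 1 (k + 1),
          ((k + 1).choose ℓ : ℤ) * x ^ ((k + 1 - ℓ) * α) * U ℓ) -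
        ε * U k - x ^ ((k + 1) * α) = 0)
    (hV0 : V 0 = -ε * (ν.factorial : ℤ) * x ^ β)
    (hV : ∀ k : ℕ, 1 ≤ k →
      (∑ ℓ ∈ Finset.Icc 1 (k + 1),
          ((k + 1).choose ℓ : ℤ) * x ^ ((k + 1 - ℓ) * α) * V (ℓ - 1)) -
        ε * V (k - 1) + ε * (ν.factorial : ℤ) * (ν : ℤ) ^ k * x ^ (k * α + β) = 0) :
    ∀ k : ℕ, 1 ≤ k → ∀ (p : ℕ) [Fact (Nat.Prime p)],
      HasSum
        (fun n : ℕ =>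
          ((ε ^ n * ((n + ν).factorial : ℤ) *
              (((n : ℤ) + ν) ^ k * x ^ (k * α) + U k) * x ^ (α * n + β) : ℤ) : ℚ_[p]))
        ((V (k - 1) : ℤ) : ℚ_[p]) := by
  have hε2 : ε * ε = 1 := by rcases hε with rfl | rfl <;> norm_num
  intro k hk p hp
  revert hk
  -- rephrase via Tt
  show 1 ≤ k → HasSum (fun n : ℕ => ((Tt ε ν β α x U k n : ℤ) : ℚ_[p])) ((V (k - 1) : ℤ) : ℚ_[p])
  -- auxiliary: the telescoping sequence tends to 0
  have hG0 : Filter.Tendsto (fun n : ℕ => ((Gg ε ν β α x n : ℤ) : ℚ_[p])) Filter.atTop (nhds 0) := by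
    have hfun : (fun n : ℕ => ((Gg ε ν β α x n : ℤ) : ℚ_[p]))
        = fun n : ℕ => (((ε ^ (n + 1) * x ^ (α * n + β)) * ((n + ν).factorial : ℤ) : ℤ) : ℚ_[p]) := by
      funext n; norm_cast; unfold Gg; ring
    rw [hfun]
    exact tendsto_coeff_factorial p ν _
  have htel := hasSum_telescope p _ hG0
  induction k using Nat.strong_induction_on with
  | _ k IH =>
    intro hk
    match k, hk, IH with
    | 1, _, _ =>
      have hfun : (fun n : ℕ => ((Tt ε ν β α x U 1 n : ℤ) : ℚ_[p]))
          = fun n : ℕ => ((Gg ε ν β α x (n + 1) : ℤ) : ℚ_[p]) - ((Gg ε ν β α x n : ℤ) : ℚ_[p]) := by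
        funext n
        rw [base_id ε hε2 ν β α x U hU1 n]
        push_cast
        ring
      rw [hfun]
      convert htel using 1
      have hval : (V 0 : ℤ) = -(Gg ε ν β α x 0) := by
        unfold Gg
        rw [hV0]
        norm_num
      rw [show (1 - 1 : ℕ) = 0 from rfl, hval]
      push_cast
      ring
    | (m + 2), _, IH =>
      have hUk' : (∑ ℓ ∈ Finset.Icc 1 (m + 2), ((m + 2).choose ℓ : ℤ) * x ^ ((m + 2 - ℓ) * α) * U ℓ)
          = ε * U (m + 1) + x ^ ((m + 2) * α) := by
        have h := hU (m + 1) (by omega)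
        linarith
      have hpt : ∀ n : ℕ, Tt ε ν β α x U (m + 2) n
          = ε * Tt ε ν β α x U (m + 1) (n + 1)
            - U (m + 1) * (Gg ε ν β α x (n + 1) - Gg ε ν β α x n)
            - ∑ ℓ ∈ Finset.Icc 1 (m + 1),
                ((m + 2).choose ℓ : ℤ) * x ^ ((m + 2 - ℓ) * α) * Tt ε ν β α x U ℓ n := by
        intro n
        have h := idsum ε hε2 ν β α x U (m + 1) hUk' n
        rw [Finset.sum_Icc_succ_top (by omega : 1 ≤ m + 2)] at h
        simp only [Nat.choose_self, Nat.cast_one, Nat.sub_self, Nat.zero_mul, pow_zero,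
          one_mul, mul_one] at h
        linarith
      have hK : HasSum (fun n : ℕ => ((Tt ε ν β α x U (m + 1) n : ℤ) : ℚ_[p]))
          ((V m : ℤ) : ℚ_[p]) := IH (m + 1) (by omega) (by omega)
      have h1 : HasSum (fun n : ℕ => ((Tt ε ν β α x U (m + 1) (n + 1) : ℤ) : ℚ_[p]))
          (((V m : ℤ) : ℚ_[p]) - ((Tt ε ν β α x U (m + 1) 0 : ℤ) : ℚ_[p])) := by
        have h := (hasSum_nat_add_iff'
          (f := fun n : ℕ => ((Tt ε ν β α x U (m + 1) n : ℤ) : ℚ_[p])) 1).mpr hK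
        rwa [Finset.sum_range_one] at h
      have h3 : HasSum (fun n : ℕ => ∑ ℓ ∈ Finset.Icc 1 (m + 1),
            (((m + 2).choose ℓ : ℤ) : ℚ_[p]) * ((x : ℚ_[p]) ^ ((m + 2 - ℓ) * α))
              * ((Tt ε ν β α x U ℓ n : ℤ) : ℚ_[p]))
          (∑ ℓ ∈ Finset.Icc 1 (m + 1), (((m + 2).choose ℓ : ℤ) : ℚ_[p])
              * ((x : ℚ_[p]) ^ ((m + 2 - ℓ) * α)) * ((V (ℓ - 1) : ℤ) : ℚ_[p])) := by
        apply hasSum_sum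
        intro ℓ hℓ
        have hℓm := Finset.mem_Icc.mp hℓ
        exact (IH ℓ (by omega) (by omega)).mul_left _
      have hcomb := ((h1.mul_left ((ε : ℤ) : ℚ_[p])).sub
        (htel.mul_left ((U (m + 1) : ℤ) : ℚ_[p]))).sub h3
      convert hcomb using 1
      · rfl
      · funext n
        rw [hpt n]
        push_cast
        ring
      · have hz := val_id ε hε2 ν β α x U V (m + 1) (by omega) (hV (m + 1) (by omega))
        rw [show (m + 2 - 1 : ℕ) = m + 1 from rfl, ← hz]
        push_cast
        ring
end

section
/- Let ε ∈ {1, −1}, let ν be a nonnegative integer, let α be a positive integer, and let x ∈ ℤ. Then for every prime p, the function n ↦ ε^n·(n+ν)!·[(n+ν+1)·x^α − ε]·x^{αn}, with values viewed in ℚ_p, has sum −ε·ν! in ℚ_p. -/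
open Filter Topology

-- norm of factorial tends to zero in ℚ_p
lemma fact_norm_tendsto (p : ℕ) [hp : Fact (Nat.Prime p)] :
    Tendsto (fun m : ℕ => ‖(((m.factorial : ℤ)) : ℚ_[p])‖) atTop (𝓝 0) := by
  have hp1 : 1 < p := hp.out.one_lt
  have hdvd : ∀ m : ℕ, (p : ℤ) ^ (m / p) ∣ (m.factorial : ℤ) := by
    intro m
    rcases lt_or_ge m p with h | h
    · simp [Nat.div_eq_of_lt h]
    · have hb : Nat.log p m < Nat.log p m + 1 := Nat.lt_succ_self _
      rw [← Int.natCast_pow, Int.natCast_dvd_natCast]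
      rw [Nat.Prime.pow_dvd_factorial_iff hp.out hb]
      have hlog : 1 ≤ Nat.log p m := Nat.le_log_of_pow_le hp1 (by rwa [pow_one])
      have h1 : 1 ∈ Finset.Ico 1 (Nat.log p m + 1) :=
        Finset.mem_Ico.mpr ⟨le_rfl, by omega⟩
      calc m / p = m / p ^ 1 := by rw [pow_one]
        _ ≤ ∑ i ∈ Finset.Ico 1 (Nat.log p m + 1), m / p ^ i :=
          Finset.single_le_sum (f := fun i => m / p ^ i) (fun _ _ => Nat.zero_le _) h1
  have hbound : ∀ m : ℕ, ‖(((m.factorial : ℤ)) : ℚ_[p])‖ ≤ ((p : ℝ) ^ (m / p : ℕ))⁻¹ := by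
    intro m
    have := (Padic.norm_int_le_pow_iff_dvd (m.factorial : ℤ) (m / p)).2 (hdvd m)
    rwa [zpow_neg, zpow_natCast] at this
  have hto : Tendsto (fun m : ℕ => ((p : ℝ) ^ (m / p : ℕ))⁻¹) atTop (𝓝 0) := by
    have h1 : Tendsto (fun k : ℕ => ((p : ℝ) ^ k)⁻¹) atTop (𝓝 0) := by
      simp_rw [← inv_pow]
      exact tendsto_pow_atTop_nhds_zero_of_lt_one (by positivity)
        (inv_lt_one_of_one_lt₀ (by exact_mod_cast hp1))
    exact h1.comp ((Filter.map_div_atTop_eq_nat p (by omega)).le)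
  exact squeeze_zero (fun _ => norm_nonneg _) hbound hto

theorem stmt_16 (ε : ℤ) (hε : ε = 1 ∨ ε = -1) (ν : ℕ) (α : ℕ) (hα : 0 < α)
    (x : ℤ) (p : ℕ) [Fact (Nat.Prime p)] :
    HasSum
      (fun n : ℕ =>
        ((ε ^ n * ((n + ν).factorial : ℤ) *
            (((n : ℤ) + ν + 1) * x ^ α - ε) * x ^ (α * n) : ℤ) : ℚ_[p]))
      ((-ε * (ν.factorial : ℤ) : ℤ) : ℚ_[p]) := by
  have hε2 : ε * ε = 1 := by rcases hε with h | h <;> simp [h]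
  set f : ℕ → ℚ_[p] := fun n =>
    ((ε ^ n * ((n + ν).factorial : ℤ) *
        (((n : ℤ) + ν + 1) * x ^ α - ε) * x ^ (α * n) : ℤ) : ℚ_[p]) with hf
  set G : ℕ → ℤ := fun n => ε * ε ^ n * ((n + ν).factorial : ℤ) * x ^ (α * n) with hG
  set g : ℕ → ℚ_[p] := fun n => ((G n : ℤ) : ℚ_[p]) with hg
  have key : ∀ n, f n = g (n + 1) - g n := by
    intro n
    have hint : ε ^ n * ((n + ν).factorial : ℤ) *
        (((n : ℤ) + ν + 1) * x ^ α - ε) * x ^ (α * n) = G (n + 1) - G n := by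
      simp only [hG]
      have h1 : (n + 1 + ν).factorial = (n + ν + 1) * (n + ν).factorial := by
        rw [show n + 1 + ν = (n + ν) + 1 by ring, Nat.factorial_succ]
      have h2 : α * (n + 1) = α * n + α := by ring
      rw [h1, h2, pow_add]
      push_cast
      rcases hε with rfl | rfl <;> ring
    simp only [hf, hg, hint]
    push_cast
    ring
  have hgz : Tendsto g atTop (𝓝 0) := by
    rw [tendsto_zero_iff_norm_tendsto_zero]
    have hb : ∀ n, ‖g n‖ ≤ ‖((((n + ν).factorial : ℤ)) : ℚ_[p])‖ := by
      intro n
      have : g n = ((ε * ε ^ n * x ^ (α * n) : ℤ) : ℚ_[p]) * ((((n + ν).factorial : ℤ)) : ℚ_[p]) := by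
        simp only [hg, hG]; push_cast; ring
      rw [this, norm_mul]
      calc ‖((ε * ε ^ n * x ^ (α * n) : ℤ) : ℚ_[p])‖ * ‖((((n + ν).factorial : ℤ)) : ℚ_[p])‖
          ≤ 1 * ‖((((n + ν).factorial : ℤ)) : ℚ_[p])‖ :=
            mul_le_mul_of_nonneg_right (Padic.norm_int_le_one _) (norm_nonneg _)
        _ = _ := one_mul _
    have hcomp : Tendsto (fun n : ℕ => ‖((((n + ν).factorial : ℤ)) : ℚ_[p])‖) atTop (𝓝 0) :=
      (fact_norm_tendsto p).comp (tendsto_add_atTop_nat ν)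
    exact squeeze_zero (fun _ => norm_nonneg _) hb hcomp
  have hfz : Tendsto f cofinite (𝓝 0) := by
    rw [Nat.cofinite_eq_atTop]
    have : Tendsto (fun n => g (n + 1) - g n) atTop (𝓝 (0 - 0)) :=
      ((hgz.comp (tendsto_add_atTop_nat 1)).sub hgz)
    simpa [key] using this.congr (fun n => (key n).symm)
  have hsummable : Summable f := NonarchimedeanAddGroup.summable_of_tendsto_cofinite_zero hfz
  have hpartial : Tendsto (fun N => ∑ n ∈ Finset.range N, f n) atTop
      (𝓝 ((-ε * (ν.factorial : ℤ) : ℤ) : ℚ_[p])) := by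
    have heq : ∀ N, ∑ n ∈ Finset.range N, f n = g N - g 0 := by
      intro N
      rw [show (fun n => f n) = (fun n => g (n+1) - g n) from funext key]
      exact Finset.sum_range_sub g N
    rw [show (fun N => ∑ n ∈ Finset.range N, f n) = (fun N => g N - g 0) from funext heq]
    have hcast : ((-ε * (ν.factorial : ℤ) : ℤ) : ℚ_[p]) = -(g 0) := by
      simp only [hg, hG]
      push_cast
      ring
    rw [hcast]
    have := hgz.sub_const (g 0)
    rwa [zero_sub] at this
  have := hsummable.hasSum.tendsto_sum_nat
  have huniq := tendsto_nhds_unique this hpartial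
  rw [← huniq]
  exact hsummable.hasSum
end

section
/- Let ε ∈ {1, −1}, let ν be a nonnegative integer, let α be a positive integer, and let x ∈ ℤ. Then for every prime p, the function n ↦ ε^n·(n+ν)!·{[(n+ν)^3 + 1]·x^{3α} − 7ε·x^{2α} + 6·x^α − ε}·x^{αn}, with values viewed in ℚ_p, has sum −ε·ν!·[(ν^2 − 3ν + 3)·x^{2α} + (ν − 5)·ε·x^α + 1] in ℚ_p. -/
open Filter Topology

theorem stmt_18 (ε : ℤ) (hε : ε = 1 ∨ ε = -1) (ν : ℕ) (α : ℕ) (hα : 0 < α)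
    (x : ℤ) (p : ℕ) [Fact (Nat.Prime p)] :
    HasSum
      (fun n : ℕ =>
        ((ε ^ n * ((n + ν).factorial : ℤ) *
            ((((n : ℤ) + ν) ^ 3 + 1) * x ^ (3 * α) - 7 * ε * x ^ (2 * α) +
              6 * x ^ α - ε) * x ^ (α * n) : ℤ) : ℚ_[p]))
      ((-ε * (ν.factorial : ℤ) *
          (((ν : ℤ) ^ 2 - 3 * ν + 3) * x ^ (2 * α) + ((ν : ℤ) - 5) * ε * x ^ α + 1) :
        ℤ) : ℚ_[p]) := by
  have hp : p.Prime := Fact.out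
  set F : ℕ → ℤ := fun n => ε ^ n * ((n + ν).factorial : ℤ) *
      ((((n : ℤ) + ν) ^ 3 + 1) * x ^ (3 * α) - 7 * ε * x ^ (2 * α) +
        6 * x ^ α - ε) * x ^ (α * n) with hFdef
  set G : ℕ → ℤ := fun n => ε ^ n * ((n + ν).factorial : ℤ) *
      (-ε * (((n : ℤ) + ν) ^ 2 - 3 * ((n : ℤ) + ν) + 3) * x ^ (2 * α) +
        (5 - ((n : ℤ) + ν)) * x ^ α - ε) * x ^ (α * n) with hGdef
  -- telescoping identity
  have htel : ∀ n : ℕ, F n = G n - G (n + 1) := by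
    intro n
    simp only [hFdef, hGdef]
    have h1 : ((n + 1 + ν).factorial : ℤ) = ((n : ℤ) + ν + 1) * ((n + ν).factorial : ℤ) := by
      have h : n + 1 + ν = (n + ν) + 1 := by omega
      rw [h, Nat.factorial_succ]
      push_cast; ring
    have h2 : x ^ (α * (n + 1)) = x ^ (α * n) * x ^ α := by
      rw [← pow_add]; ring_nf
    have h3 : x ^ (3 * α) = (x ^ α) ^ 3 := by
      rw [← pow_mul]; ring_nf
    have h4 : x ^ (2 * α) = (x ^ α) ^ 2 := by
      rw [← pow_mul]; ring_nf
    rw [h1, h2, h3, h4, pow_succ]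
    push_cast
    rcases hε with h | h <;> subst h <;> ring
  -- p-power divisibility of G n
  have hdvdfac : ∀ n : ℕ, p ^ (n / p) ∣ n.factorial := by
    intro n
    rw [Nat.Prime.pow_dvd_factorial_iff hp (b := Nat.log p n + 2) (by omega)]
    calc n / p = n / p ^ 1 := by rw [pow_one]
      _ ≤ ∑ i ∈ Finset.Ico 1 (Nat.log p n + 2), n / p ^ i :=
          Finset.single_le_sum (f := fun i => n / p ^ i) (fun i _ => Nat.zero_le _)
            (show (1:ℕ) ∈ Finset.Ico 1 (Nat.log p n + 2) from Finset.mem_Ico.mpr ⟨le_rfl, by omega⟩)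
  have hdvd : ∀ n : ℕ, (p : ℤ) ^ (n / p) ∣ G n := by
    intro n
    have h1 : (p : ℤ) ^ (n / p) ∣ ((n + ν).factorial : ℤ) := by
      exact_mod_cast Int.natCast_dvd_natCast.mpr
        ((hdvdfac n).trans (Nat.factorial_dvd_factorial (Nat.le_add_right n ν)))
    exact ((h1.mul_left _).mul_right _).mul_right _
  -- G tends to zero in ℚ_p
  have hGnorm : ∀ n : ℕ, ‖((G n : ℤ) : ℚ_[p])‖ ≤ ((p : ℝ))⁻¹ ^ (n / p) := by
    intro n
    have := (Padic.norm_int_le_pow_iff_dvd (G n) (n / p)).mpr (by exact_mod_cast hdvd n)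
    calc ‖((G n : ℤ) : ℚ_[p])‖ ≤ (p : ℝ) ^ (-(n / p : ℕ) : ℤ) := this
      _ = ((p : ℝ))⁻¹ ^ (n / p) := by
          rw [zpow_neg, zpow_natCast, inv_pow]
  have hrp : (0:ℝ) ≤ (p : ℝ)⁻¹ := by positivity
  have hr1 : (p : ℝ)⁻¹ < 1 := by
    rw [inv_lt_one_iff₀]
    right
    exact_mod_cast hp.one_lt
  have hbound0 : Tendsto (fun n : ℕ => ((p : ℝ))⁻¹ ^ (n / p)) atTop (𝓝 0) := by
    refine (tendsto_pow_atTop_nhds_zero_of_lt_one hrp hr1).comp ?_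
    exact Nat.tendsto_div_const_atTop hp.pos.ne'
  have hG0 : Tendsto (fun n : ℕ => ((G n : ℤ) : ℚ_[p])) atTop (𝓝 0) := by
    rw [tendsto_zero_iff_norm_tendsto_zero]
    exact squeeze_zero (fun n => norm_nonneg _) hGnorm hbound0
  -- summability
  have hF0 : Tendsto (fun n : ℕ => ((F n : ℤ) : ℚ_[p])) atTop (𝓝 0) := by
    have : (fun n : ℕ => ((F n : ℤ) : ℚ_[p])) =
        fun n => ((G n : ℤ) : ℚ_[p]) - ((G (n + 1) : ℤ) : ℚ_[p]) := by
      funext n; rw [htel n]; push_cast; ring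
    rw [this]
    simpa using hG0.sub (hG0.comp (tendsto_add_atTop_nat 1))
  have hsum : Summable (fun n : ℕ => ((F n : ℤ) : ℚ_[p])) := by
    apply NonarchimedeanAddGroup.summable_of_tendsto_cofinite_zero
    rwa [Nat.cofinite_eq_atTop]
  have h1 := hsum.hasSum
  have h2 := h1.tendsto_sum_nat
  have hpart : ∀ N : ℕ, ∑ i ∈ Finset.range N, ((F i : ℤ) : ℚ_[p]) =
      ((G 0 : ℤ) : ℚ_[p]) - ((G N : ℤ) : ℚ_[p]) := by
    intro N
    have : ∀ i, ((F i : ℤ) : ℚ_[p]) = ((G i : ℤ) : ℚ_[p]) - ((G (i + 1) : ℤ) : ℚ_[p]) := by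
      intro i; rw [htel i]; push_cast; ring
    simp_rw [this]
    exact Finset.sum_range_sub' (fun i => ((G i : ℤ) : ℚ_[p])) N
  have h3 : Tendsto (fun N => ∑ i ∈ Finset.range N, ((F i : ℤ) : ℚ_[p])) atTop
      (𝓝 ((G 0 : ℤ) : ℚ_[p])) := by
    simp_rw [hpart]
    simpa using tendsto_const_nhds.sub hG0
  have htsum : ∑' n, ((F n : ℤ) : ℚ_[p]) = ((G 0 : ℤ) : ℚ_[p]) :=
    tendsto_nhds_unique h2 h3
  have hG0val : G 0 = -ε * (ν.factorial : ℤ) *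
      (((ν : ℤ) ^ 2 - 3 * ν + 3) * x ^ (2 * α) + ((ν : ℤ) - 5) * ε * x ^ α + 1) := by
    simp only [hGdef]
    rcases hε with h | h <;> subst h <;> simp <;> ring
  rw [← hG0val, ← htsum]
  exact h1
end
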